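/- Assume β₁ = 1 + α² + δ₁ + δ₂ and β₁ < (1 + α√(δ₁/δ₂))². Then for every integer n with |n| ≥ 2, the polynomial P_n(λ) = λ² + (β(n) − β₁)λ + γ(n) − n²δ₂β₁ has no purely imaginary roots (including 0). -/
import Mathlib


open Complex

/-- With `β₁ = 1 + α² + δ₁ + δ₂ < (1 + α√(δ₁/δ₂))²`, for every integer `n` with
`|n| ≥ 2`, the polynomial `P_n(λ) = λ² + (β(n) − β₁)λ + γ(n) − n²δ₂β₁` has no
purely imaginary roots (including 0). -/
theorem stmt_5 (δ₁ δ₂ α : ℝ) (hδ₁ : 0 < δ₁) (hδ₂ : 0 < δ₂) (hα : 0 < α)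
    (β₁ : ℝ) (hβ₁ : β₁ = 1 + α ^ 2 + δ₁ + δ₂)
    (hass : β₁ < (1 + α * Real.sqrt (δ₁ / δ₂)) ^ 2)
    (n : ℤ) (hn : 2 ≤ |n|) :
    ∀ t : ℝ,
      ((t : ℂ) * Complex.I) ^ 2
          + ((1 + α ^ 2 + (n : ℝ) ^ 2 * (δ₁ + δ₂) - β₁ : ℝ) : ℂ) * ((t : ℂ) * Complex.I)
          + (((n : ℝ) ^ 2 * δ₂ + (n : ℝ) ^ 2 * δ₁ * α ^ 2 + (n : ℝ) ^ 4 * δ₁ * δ₂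
              + α ^ 2 - (n : ℝ) ^ 2 * δ₂ * β₁ : ℝ) : ℂ)
        ≠ 0 := by
  intro t h
  set s := Real.sqrt (δ₁ / δ₂) with hs
  have hs0 : 0 ≤ s := Real.sqrt_nonneg _
  have hs2 : s ^ 2 * δ₂ = δ₁ := by
    rw [hs, Real.sq_sqrt (by positivity : (0:ℝ) ≤ δ₁ / δ₂)]
    field_simp
  have hm4 : (4 : ℝ) ≤ (n : ℝ) ^ 2 := by
    have h2 : (2:ℤ)^2 ≤ n^2 := by
      nlinarith [_root_.sq_abs n, hn]
    exact_mod_cast h2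
  have hm0 : (0:ℝ) < (n : ℝ) ^ 2 := by nlinarith
  set m : ℝ := (n : ℝ) ^ 2 with hmdef
  set B : ℝ := 1 + α ^ 2 + m * (δ₁ + δ₂) - β₁ with hBdef
  set C : ℝ := m * δ₂ + m * δ₁ * α ^ 2 + (n:ℝ) ^ 4 * δ₁ * δ₂ + α ^ 2 - m * δ₂ * β₁
    with hCdef
  have hCm : C = m * δ₂ + m * δ₁ * α ^ 2 + m ^ 2 * δ₁ * δ₂ + α ^ 2 - m * δ₂ * β₁ := by
    rw [hCdef, hmdef]; ring
  -- C > 0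
  have hC : 0 < C := by
    rw [hCm]
    have key : m * δ₂ * β₁ < m * δ₂ * (1 + 2*α*s + α^2*s^2) := by
      have h1 : (1 + α * s)^2 = 1 + 2*α*s + α^2*s^2 := by ring
      have := mul_lt_mul_of_pos_left hass (mul_pos hm0 hδ₂)
      rw [h1] at this
      exact this
    have hss : (m*s*δ₂)^2 = m^2 * δ₁ * δ₂ := by
      have : (m*s*δ₂)^2 = m^2 * (s^2*δ₂) * δ₂ := by ring
      rw [this, hs2]
    nlinarith [sq_nonneg (m*s*δ₂ - α), hss, key, mul_pos hm0 hδ₂]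
  -- B > 0
  have hB : 0 < B := by rw [hBdef]; subst hβ₁; nlinarith
  -- rewrite the complex expression
  have hrw : ((t : ℂ) * Complex.I) ^ 2 + (B : ℂ) * ((t : ℂ) * Complex.I) + (C : ℂ)
      = ((C - t^2 : ℝ) : ℂ) + ((B * t : ℝ) : ℂ) * Complex.I := by
    push_cast
    ring_nf
    rw [Complex.I_sq]
    ring
  rw [hrw] at h
  have hre := congrArg Complex.re h
  have him := congrArg Complex.im h
  simp [← Complex.ofReal_pow] at hre him
  have ht : t = 0 := by
    rcases him with h1 | h2
    · exact absurd h1 (ne_of_gt hB)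
    · exact h2
  rw [ht] at hre
  simp at hre
  exact absurd hre (ne_of_gt hC)
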